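/- (Proposition 1, symmetry part, abstract form) Let U : ℝᵖ → ℝ, G : ℝᵖ → ℝᴶ, and c : ℝᵖ → ℝᴹ be twice continuously differentiable with J + M ≤ p, and let x* ∈ ℝᴹ. Assume: (1) there are an open neighborhood ε of x* and a continuous map w* : ε → ℝᵖ such that for every x ∈ ε, w*(x) is the unique maximizer of U over the set {w ∈ ℝᵖ : G(w) = 0 and c(w) = x}; (2) the J + M gradients ∇Gʲ(w*(x*)) (j = 1,…,J) and ∇cᵐ(w*(x*)) (m = 1,…,M) are linearly independent; (3) there exist μ₀ ∈ ℝᴶ, λ₀ ∈ ℝᴹ with ∇U(w*(x*)) = Σⱼ μ₀,ⱼ∇Gʲ(w*(x*)) + Σₘ λ₀,ₘ∇cᵐ(w*(x*)); and (4) the Hessian at w*(x*) of the Lagrangian U − Σⱼ μ₀,ⱼGʲ − Σₘ λ₀,ₘcᵐ, restricted to the common kernel of the gradients in (2), is invertible. Then there exists an open neighborhood of x* on which the Lagrange multipliers λ(x) ∈ ℝᴹ of the constraints c(w) = x are uniquely determined, continuously differentiable in x, and satisfy ∂λᵢ/∂xⱼ(x) = ∂λⱼ/∂xᵢ(x) for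 all i, j. -/

import Mathlib

open Filter Set Topology ContinuousLinearMap

private theorem sum_elim_smul_split {p J M : ℕ} (a : Fin J → ℝ) (b : Fin M → ℝ)
    (f : Fin J → (Fin p → ℝ) →L[ℝ] ℝ) (g : Fin M → (Fin p → ℝ) →L[ℝ] ℝ) :
    ∑ k : Fin J ⊕ Fin M, Sum.elim a b k • Sum.elim f g k
      = (∑ j, a j • f j) + ∑ m, b m • g m := by
  simp [Fintype.sum_sum_type]

set_option maxHeartbeats 1000000 in
theorem stmt_12 (p J M : ℕ) (hpJM : J + M ≤ p)
    (U : (Fin p → ℝ) → ℝ) (hU : ContDiff ℝ 2 U)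
    (G : (Fin p → ℝ) → (Fin J → ℝ)) (hG : ContDiff ℝ 2 G)
    (c : (Fin p → ℝ) → (Fin M → ℝ)) (hc : ContDiff ℝ 2 c)
    (xstar : Fin M → ℝ)
    (ε : Set (Fin M → ℝ)) (hε : IsOpen ε) (hxε : xstar ∈ ε)
    (wstar : (Fin M → ℝ) → (Fin p → ℝ)) (hw : ContinuousOn wstar ε)
    (hfeas : ∀ x ∈ ε, G (wstar x) = 0 ∧ c (wstar x) = x)
    (hmax : ∀ x ∈ ε, ∀ w : Fin p → ℝ, G w = 0 → c w = x → w ≠ wstar x → U w < U (wstar x))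
    (hLICQ : LinearIndependent ℝ (Sum.elim
        (fun j : Fin J => fderiv ℝ (fun w => G w j) (wstar xstar))
        (fun m : Fin M => fderiv ℝ (fun w => c w m) (wstar xstar))))
    (μ₀ : Fin J → ℝ) (lam₀ : Fin M → ℝ)
    (hFOC₀ : fderiv ℝ U (wstar xstar) =
        ∑ j, μ₀ j • fderiv ℝ (fun w => G w j) (wstar xstar)
          + ∑ m, lam₀ m • fderiv ℝ (fun w => c w m) (wstar xstar))
    (hker : ∀ w : Fin p → ℝ,
        (∀ j, fderiv ℝ (fun v => G v j) (wstar xstar) w = 0) →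
        (∀ m, fderiv ℝ (fun v => c v m) (wstar xstar) w = 0) → w ≠ 0 →
        ∃ w' : Fin p → ℝ,
          (∀ j, fderiv ℝ (fun v => G v j) (wstar xstar) w' = 0) ∧
          (∀ m, fderiv ℝ (fun v => c v m) (wstar xstar) w' = 0) ∧
          fderiv ℝ (fun v => fderiv ℝ
              (fun u => U u - ∑ j, μ₀ j * G u j - ∑ m, lam₀ m * c u m) v w')
            (wstar xstar) w ≠ 0) :
    ∃ ε' : Set (Fin M → ℝ), IsOpen ε' ∧ xstar ∈ ε' ∧ ε' ⊆ ε ∧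
      ∃ lam : (Fin M → ℝ) → (Fin M → ℝ), ∃ mu : (Fin M → ℝ) → (Fin J → ℝ),
        ContDiffOn ℝ 1 lam ε' ∧ ContDiffOn ℝ 1 mu ε' ∧
        (∀ x ∈ ε', fderiv ℝ U (wstar x) =
            ∑ j, mu x j • fderiv ℝ (fun w => G w j) (wstar x)
              + ∑ m, lam x m • fderiv ℝ (fun w => c w m) (wstar x)) ∧
        (∀ x ∈ ε', ∀ (mu' : Fin J → ℝ) (lam' : Fin M → ℝ),
            fderiv ℝ U (wstar x) =
              ∑ j, mu' j • fderiv ℝ (fun w => G w j) (wstar x)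
                + ∑ m, lam' m • fderiv ℝ (fun w => c w m) (wstar x) →
            mu' = mu x ∧ lam' = lam x) ∧
        (∀ x ∈ ε', ∀ i j' : Fin M,
            fderiv ℝ (fun y => lam y i) x (Pi.single j' 1) =
              fderiv ℝ (fun y => lam y j') x (Pi.single i 1)) := by
  classical
  set w₀ := wstar xstar with hw₀def
  obtain ⟨hG0, hc0⟩ := hfeas xstar hxε
  -- ## basic smoothness
  have hGj : ∀ j, ContDiff ℝ 2 fun v => G v j := by
    intro j; exact (ContinuousLinearMap.proj j).contDiff.comp hG
  have hcm : ∀ m, ContDiff ℝ 2 fun v => c v m := by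
    intro m; exact (ContinuousLinearMap.proj m).contDiff.comp hc
  have hDU : ContDiff ℝ 1 fun w => fderiv ℝ U w := hU.fderiv_right (by norm_num)
  have hDG : ∀ j, ContDiff ℝ 1 fun w => fderiv ℝ (fun v => G v j) w :=
    fun j => (hGj j).fderiv_right (by norm_num)
  have hDc : ∀ m, ContDiff ℝ 1 fun w => fderiv ℝ (fun v => c v m) w :=
    fun m => (hcm m).fderiv_right (by norm_num)
  -- the family of constraint gradients
  set gr : (Fin p → ℝ) → (Fin J ⊕ Fin M) → (Fin p → ℝ) →L[ℝ] ℝ := fun w =>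
    Sum.elim (fun j => fderiv ℝ (fun v => G v j) w) (fun m => fderiv ℝ (fun v => c v m) w)
    with hgrdef
  have hgrcont : ∀ k, Continuous fun w => gr w k := by
    rintro (j | m)
    · exact (hDG j).continuous
    · exact (hDc m).continuous
  -- ## the Lagrangian and its derivatives
  set Lag : (Fin p → ℝ) → ℝ :=
    fun u => U u - ∑ j, μ₀ j * G u j - ∑ m, lam₀ m * c u m with hLagdef
  have hLag : ContDiff ℝ 2 Lag := by
    refine (hU.sub (ContDiff.sum fun j _ => contDiff_const.mul (hGj j))).sub
      (ContDiff.sum fun m _ => contDiff_const.mul (hcm m))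
  have hDLag : ∀ v, fderiv ℝ Lag v = fderiv ℝ U v
      - ∑ j, μ₀ j • fderiv ℝ (fun v => G v j) v
      - ∑ m, lam₀ m • fderiv ℝ (fun v => c v m) v := by
    intro v
    have h1 : HasFDerivAt Lag (fderiv ℝ U v
        - ∑ j, μ₀ j • fderiv ℝ (fun v => G v j) v
        - ∑ m, lam₀ m • fderiv ℝ (fun v => c v m) v) v := by
      refine HasFDerivAt.sub (HasFDerivAt.sub ((hU.differentiable (by norm_num) v).hasFDerivAt)
        (HasFDerivAt.fun_sum fun j _ =>
          (((hGj j).differentiable (by norm_num) v).hasFDerivAt).const_mul (μ₀ j)))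
        (HasFDerivAt.fun_sum fun m _ =>
          (((hcm m).differentiable (by norm_num) v).hasFDerivAt).const_mul (lam₀ m))
    exact h1.fderiv
  -- second derivatives at w₀
  set HU : (Fin p → ℝ) →L[ℝ] ((Fin p → ℝ) →L[ℝ] ℝ) :=
    fderiv ℝ (fun w => fderiv ℝ U w) w₀ with hHUdef
  set HG : Fin J → (Fin p → ℝ) →L[ℝ] ((Fin p → ℝ) →L[ℝ] ℝ) :=
    fun j => fderiv ℝ (fun w => fderiv ℝ (fun v => G v j) w) w₀ with hHGdef
  set Hc : Fin M → (Fin p → ℝ) →L[ℝ] ((Fin p → ℝ) →L[ℝ] ℝ) :=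
    fun m => fderiv ℝ (fun w => fderiv ℝ (fun v => c v m) w) w₀ with hHcdef
  have hHU : HasFDerivAt (fun w => fderiv ℝ U w) HU w₀ :=
    (hDU.differentiable one_ne_zero w₀).hasFDerivAt
  have hHG : ∀ j, HasFDerivAt (fun w => fderiv ℝ (fun v => G v j) w) (HG j) w₀ :=
    fun j => ((hDG j).differentiable one_ne_zero w₀).hasFDerivAt
  have hHc : ∀ m, HasFDerivAt (fun w => fderiv ℝ (fun v => c v m) w) (Hc m) w₀ :=
    fun m => ((hDc m).differentiable one_ne_zero w₀).hasFDerivAt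
  -- the second derivative pairing of the Lagrangian
  have hpair : ∀ w' δw, fderiv ℝ (fun v => fderiv ℝ Lag v w') w₀ δw
      = HU δw w' - (∑ j, μ₀ j * HG j δw w') - ∑ m, lam₀ m * Hc m δw w' := by
    intro w' δw
    have hM : HasFDerivAt (fun v => fderiv ℝ Lag v w')
        ((ContinuousLinearMap.apply ℝ ℝ w').comp HU
          - ∑ j, μ₀ j • (ContinuousLinearMap.apply ℝ ℝ w').comp (HG j)
          - ∑ m, lam₀ m • (ContinuousLinearMap.apply ℝ ℝ w').comp (Hc m)) w₀ := by
      have e1 : (fun v => fderiv ℝ Lag v w') = fun v =>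
          fderiv ℝ U v w' - (∑ j, μ₀ j * fderiv ℝ (fun v => G v j) v w')
            - ∑ m, lam₀ m * fderiv ℝ (fun v => c v m) v w' := by
        funext v; rw [hDLag v]; simp
      rw [e1]
      refine HasFDerivAt.sub (HasFDerivAt.sub ?_ (HasFDerivAt.fun_sum fun j _ => ?_))
        (HasFDerivAt.fun_sum fun m _ => ?_)
      · exact (ContinuousLinearMap.apply ℝ ℝ w').hasFDerivAt.comp w₀ hHU
      · exact ((ContinuousLinearMap.apply ℝ ℝ w').hasFDerivAt.comp w₀ (hHG j)).const_mul (μ₀ j)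
      · exact ((ContinuousLinearMap.apply ℝ ℝ w').hasFDerivAt.comp w₀ (hHc m)).const_mul (lam₀ m)
    rw [hM.fderiv]
    simp [ContinuousLinearMap.sub_apply, ContinuousLinearMap.sum_apply,
      ContinuousLinearMap.smul_apply, ContinuousLinearMap.comp_apply,
      ContinuousLinearMap.apply_apply, smul_eq_mul]
  -- ## the KKT map Φ
  set Φ : ((Fin p → ℝ) × (Fin J → ℝ) × (Fin M → ℝ)) →
      (((Fin p → ℝ) →L[ℝ] ℝ) × (Fin J → ℝ) × (Fin M → ℝ)) := fun z =>
    (fderiv ℝ U z.1 - ∑ j, z.2.1 j • fderiv ℝ (fun v => G v j) z.1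
        - ∑ m, z.2.2 m • fderiv ℝ (fun v => c v m) z.1, G z.1, c z.1) with hΦdef
  set z₀ : ((Fin p → ℝ) × (Fin J → ℝ) × (Fin M → ℝ)) := (w₀, μ₀, lam₀) with hz₀def
  have hΦcd : ContDiff ℝ 1 Φ := by
    refine ContDiff.prodMk (ContDiff.sub (ContDiff.sub ?_ ?_) ?_) (ContDiff.prodMk ?_ ?_)
    · exact hDU.comp contDiff_fst
    · refine ContDiff.sum fun j _ => ContDiff.fun_smul ?_ ((hDG j).comp contDiff_fst)
      exact (ContinuousLinearMap.proj j : (Fin J → ℝ) →L[ℝ] ℝ).contDiff.comp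
        (contDiff_fst.comp contDiff_snd)
    · refine ContDiff.sum fun m _ => ContDiff.fun_smul ?_ ((hDc m).comp contDiff_fst)
      exact (ContinuousLinearMap.proj m : (Fin M → ℝ) →L[ℝ] ℝ).contDiff.comp
        (contDiff_snd.comp contDiff_snd)
    · exact (hG.of_le (by norm_num)).comp contDiff_fst
    · exact (hc.of_le (by norm_num)).comp contDiff_fst
  -- the derivative of Φ at z₀
  set fstL : ((Fin p → ℝ) × (Fin J → ℝ) × (Fin M → ℝ)) →L[ℝ] (Fin p → ℝ) :=
    ContinuousLinearMap.fst ℝ (Fin p → ℝ) ((Fin J → ℝ) × (Fin M → ℝ)) with hfstLdef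
  set sndL : ((Fin p → ℝ) × (Fin J → ℝ) × (Fin M → ℝ)) →L[ℝ] ((Fin J → ℝ) × (Fin M → ℝ)) :=
    ContinuousLinearMap.snd ℝ (Fin p → ℝ) ((Fin J → ℝ) × (Fin M → ℝ)) with hsndLdef
  set aL : Fin J → (((Fin p → ℝ) × (Fin J → ℝ) × (Fin M → ℝ)) →L[ℝ] ℝ) := fun j =>
    (ContinuousLinearMap.proj j).comp
      ((ContinuousLinearMap.fst ℝ (Fin J → ℝ) (Fin M → ℝ)).comp sndL) with haLdef
  set bL : Fin M → (((Fin p → ℝ) × (Fin J → ℝ) × (Fin M → ℝ)) →L[ℝ] ℝ) := fun m =>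
    (ContinuousLinearMap.proj m).comp
      ((ContinuousLinearMap.snd ℝ (Fin J → ℝ) (Fin M → ℝ)).comp sndL) with hbLdef
  set C₁ : ((Fin p → ℝ) × (Fin J → ℝ) × (Fin M → ℝ)) →L[ℝ] ((Fin p → ℝ) →L[ℝ] ℝ) :=
    HU.comp fstL
      - ∑ j, (μ₀ j • (HG j).comp fstL + (aL j).smulRight (fderiv ℝ (fun v => G v j) w₀))
      - ∑ m, (lam₀ m • (Hc m).comp fstL + (bL m).smulRight (fderiv ℝ (fun v => c v m) w₀))
    with hC₁def
  set C : ((Fin p → ℝ) × (Fin J → ℝ) × (Fin M → ℝ)) →L[ℝ]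
      (((Fin p → ℝ) →L[ℝ] ℝ) × (Fin J → ℝ) × (Fin M → ℝ)) :=
    C₁.prod ((ContinuousLinearMap.pi fun j => (fderiv ℝ (fun v => G v j) w₀).comp fstL).prod
      (ContinuousLinearMap.pi fun m => (fderiv ℝ (fun v => c v m) w₀).comp fstL)) with hCdef
  have hΦC : HasFDerivAt Φ C z₀ := by
    refine HasFDerivAt.prodMk (HasFDerivAt.sub (HasFDerivAt.sub ?_ ?_) ?_)
      (HasFDerivAt.prodMk ?_ ?_)
    · exact hHU.comp z₀ hasFDerivAt_fst
    · refine HasFDerivAt.fun_sum fun j _ => ?_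
      have h1 : HasFDerivAt
          (fun z : (Fin p → ℝ) × (Fin J → ℝ) × (Fin M → ℝ) => z.2.1 j) (aL j) z₀ :=
        (aL j).hasFDerivAt
      have h2 : HasFDerivAt
          (fun z : (Fin p → ℝ) × (Fin J → ℝ) × (Fin M → ℝ) =>
            fderiv ℝ (fun v => G v j) z.1) ((HG j).comp fstL) z₀ :=
        (hHG j).comp z₀ hasFDerivAt_fst
      exact h1.smul h2
    · refine HasFDerivAt.fun_sum fun m _ => ?_
      have h1 : HasFDerivAt
          (fun z : (Fin p → ℝ) × (Fin J → ℝ) × (Fin M → ℝ) => z.2.2 m) (bL m) z₀ :=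
        (bL m).hasFDerivAt
      have h2 : HasFDerivAt
          (fun z : (Fin p → ℝ) × (Fin J → ℝ) × (Fin M → ℝ) =>
            fderiv ℝ (fun v => c v m) z.1) ((Hc m).comp fstL) z₀ :=
        (hHc m).comp z₀ hasFDerivAt_fst
      exact h1.smul h2
    · refine hasFDerivAt_pi.2 fun j => ?_
      have hd : HasFDerivAt (fun v => G v j) (fderiv ℝ (fun v => G v j) w₀) w₀ := ((hGj j).differentiable (by norm_num) w₀).hasFDerivAt
      have h := hd.comp z₀ (hasFDerivAt_fst (𝕜 := ℝ) (p := z₀))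
      exact h
    · refine hasFDerivAt_pi.2 fun m => ?_
      have hd : HasFDerivAt (fun v => c v m) (fderiv ℝ (fun v => c v m) w₀) w₀ := ((hcm m).differentiable (by norm_num) w₀).hasFDerivAt
      have h := hd.comp z₀ (hasFDerivAt_fst (𝕜 := ℝ) (p := z₀))
      exact h
  have hCinj : ∀ δ, C δ = 0 → δ = 0 := by
    rintro ⟨δw, δa, δb⟩ hδ
    have h2 : ∀ j, fderiv ℝ (fun v => G v j) w₀ δw = 0 := by
      intro j
      have := congrArg (fun q => q.2.1 j) hδ
      simpa [hCdef, hfstLdef] using this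
    have h3 : ∀ m, fderiv ℝ (fun v => c v m) w₀ δw = 0 := by
      intro m
      have := congrArg (fun q => q.2.2 m) hδ
      simpa [hCdef, hfstLdef] using this
    have h1 : HU δw - (∑ j, (μ₀ j • HG j δw + δa j • fderiv ℝ (fun v => G v j) w₀))
        - (∑ m, (lam₀ m • Hc m δw + δb m • fderiv ℝ (fun v => c v m) w₀)) = 0 := by
      have h0 := congrArg Prod.fst hδ
      simpa [hCdef, hC₁def, haLdef, hbLdef, hfstLdef, hsndLdef, ContinuousLinearMap.sub_apply,
        ContinuousLinearMap.sum_apply, ContinuousLinearMap.add_apply,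
        ContinuousLinearMap.smul_apply, ContinuousLinearMap.comp_apply,
        ContinuousLinearMap.smulRight_apply] using h0
    have hLI : LinearIndependent ℝ (gr w₀) := hLICQ
    rcases eq_or_ne δw 0 with rfl | hδw
    · have h4 : (∑ j, δa j • fderiv ℝ (fun v => G v j) w₀)
          + ∑ m, δb m • fderiv ℝ (fun v => c v m) w₀ = 0 := by
        have h5 := h1
        simp only [map_zero, smul_zero, zero_add, zero_sub] at h5
        rw [sub_eq_add_neg, ← neg_add, neg_eq_zero] at h5
        exact h5
      have h6 : ∑ k, Sum.elim δa δb k • gr w₀ k = 0 := by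
        rw [hgrdef]
        rw [sum_elim_smul_split]
        exact h4
      have h7 := Fintype.linearIndependent_iff.mp hLI (Sum.elim δa δb) h6
      have ha : δa = 0 := funext fun j => h7 (Sum.inl j)
      have hb : δb = 0 := funext fun m => h7 (Sum.inr m)
      rw [ha, hb]; rfl
    · obtain ⟨w', hG', hc', hpair'⟩ := hker δw h2 h3 hδw
      exfalso
      apply hpair'
      rw [hpair w' δw]
      have h8 := congrArg (fun (L : (Fin p → ℝ) →L[ℝ] ℝ) => L w') h1
      simp only [ContinuousLinearMap.sub_apply, ContinuousLinearMap.sum_apply,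
        ContinuousLinearMap.add_apply, ContinuousLinearMap.smul_apply,
        ContinuousLinearMap.zero_apply, smul_eq_mul, hG' _, hc' _, mul_zero, add_zero] at h8
      exact h8
  haveI hFD : FiniteDimensional ℝ ((Fin p → ℝ) →L[ℝ] ℝ) :=
    (LinearMap.toContinuousLinearMap (𝕜 := ℝ) (E := Fin p → ℝ) (F' := ℝ)).finiteDimensional
  have hCsurj : Function.Surjective C := by
    have hfr : Module.finrank ℝ ((Fin p → ℝ) × (Fin J → ℝ) × (Fin M → ℝ))
        = Module.finrank ℝ (((Fin p → ℝ) →L[ℝ] ℝ) × (Fin J → ℝ) × (Fin M → ℝ)) := by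
      have h1 : Module.finrank ℝ ((Fin p → ℝ) →L[ℝ] ℝ) = Module.finrank ℝ (Fin p → ℝ) := by
        rw [← (LinearMap.toContinuousLinearMap (𝕜 := ℝ) (E := Fin p → ℝ)
          (F' := ℝ)).finrank_eq]
        exact Subspace.dual_finrank_eq
      simp [Module.finrank_prod, h1]
    have hinj : Function.Injective (C : ((Fin p → ℝ) × (Fin J → ℝ) × (Fin M → ℝ)) →ₗ[ℝ]
        (((Fin p → ℝ) →L[ℝ] ℝ) × (Fin J → ℝ) × (Fin M → ℝ))) := by
      intro x y hxy
      have := hCinj (x - y) (by rw [map_sub]; rw [show C x = C y from hxy]; exact sub_self _)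
      exact sub_eq_zero.mp this
    exact (LinearMap.injective_iff_surjective_of_finrank_eq_finrank hfr).mp hinj
  -- ## local inverse of Φ
  have hbij : Function.Bijective C := ⟨fun x y hxy => by
    have := hCinj (x - y) (by rw [map_sub, hxy, sub_self]); exact sub_eq_zero.mp this, hCsurj⟩
  set eC : ((Fin p → ℝ) × (Fin J → ℝ) × (Fin M → ℝ)) ≃L[ℝ]
      (((Fin p → ℝ) →L[ℝ] ℝ) × (Fin J → ℝ) × (Fin M → ℝ)) :=
    (LinearEquiv.ofBijective (C : _ →ₗ[ℝ] _) hbij).toContinuousLinearEquiv with heCdef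
  have heC : (eC : ((Fin p → ℝ) × (Fin J → ℝ) × (Fin M → ℝ)) →L[ℝ]
      (((Fin p → ℝ) →L[ℝ] ℝ) × (Fin J → ℝ) × (Fin M → ℝ))) = C := by
    ext δ <;> rfl
  have hΦe : HasFDerivAt Φ (eC : _ →L[ℝ] _) z₀ := by rw [heC]; exact hΦC
  have hΦz₀ : Φ z₀ = (0, 0, xstar) := by
    refine Prod.ext ?_ (Prod.ext ?_ ?_)
    · show fderiv ℝ U w₀ - ∑ j, μ₀ j • fderiv ℝ (fun v => G v j) w₀
        - ∑ m, lam₀ m • fderiv ℝ (fun v => c v m) w₀ = 0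
      rw [hFOC₀]; abel
    · exact hG0
    · exact hc0
  set Ψ := (hΦcd.contDiffAt.hasStrictFDerivAt' hΦe one_ne_zero).localInverse Φ eC z₀ with hΨdef
  have hΨcd : ContDiffAt ℝ 1 Ψ (0, 0, xstar) := by
    rw [← hΦz₀]
    exact hΦcd.contDiffAt.to_localInverse hΦe one_ne_zero
  have hΨleft : ∀ᶠ z in 𝓝 z₀, Ψ (Φ z) = z :=
    (hΦcd.contDiffAt.hasStrictFDerivAt' hΦe one_ne_zero).eventually_left_inverse
  have hΨright : ∀ᶠ y in 𝓝 ((0 : (Fin p → ℝ) →L[ℝ] ℝ), (0 : Fin J → ℝ), xstar), Φ (Ψ y) = y := by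
    rw [← hΦz₀]
    exact (hΦcd.contDiffAt.hasStrictFDerivAt' hΦe one_ne_zero).eventually_right_inverse
  -- ζ : the C¹ KKT solution path
  set ζ : (Fin M → ℝ) → ((Fin p → ℝ) × (Fin J → ℝ) × (Fin M → ℝ)) :=
    fun x => Ψ (0, 0, x) with hζdef
  have hι3 : ContDiff ℝ 1 (fun x : Fin M → ℝ =>
      ((0 : (Fin p → ℝ) →L[ℝ] ℝ), (0 : Fin J → ℝ), x)) :=
    contDiff_const.prodMk (contDiff_const.prodMk contDiff_id)
  have hζcd : ContDiffAt ℝ 1 ζ xstar := hΨcd.comp xstar hι3.contDiffAt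
  -- ## multipliers: left inverse machinery
  have hLI : LinearIndependent ℝ (gr w₀) := hLICQ
  set Tlin : ((Fin J ⊕ Fin M) → ℝ) →ₗ[ℝ] ((Fin p → ℝ) →L[ℝ] ℝ) :=
    ∑ k, LinearMap.smulRight (LinearMap.proj k) (gr w₀ k) with hTlindef
  have hTapp : ∀ a, Tlin a = ∑ k, a k • gr w₀ k := by
    intro a
    simp [hTlindef, LinearMap.sum_apply, LinearMap.smulRight_apply, LinearMap.proj_apply]
  have hTker : LinearMap.ker Tlin = ⊥ := by
    rw [LinearMap.ker_eq_bot']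
    intro a ha
    funext k
    exact Fintype.linearIndependent_iff.mp hLI a (by rw [← hTapp]; exact ha) k
  obtain ⟨Rlin, hR⟩ := Tlin.exists_leftInverse_of_injective hTker
  set Rc : ((Fin p → ℝ) →L[ℝ] ℝ) →L[ℝ] ((Fin J ⊕ Fin M) → ℝ) :=
    LinearMap.toContinuousLinearMap Rlin with hRcdef
  set τ : (Fin p → ℝ) → (((Fin J ⊕ Fin M) → ℝ) →L[ℝ] ((Fin J ⊕ Fin M) → ℝ)) :=
    fun w => ∑ k, (ContinuousLinearMap.proj k).smulRight (Rc (gr w k)) with hτdef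
  have hτapp : ∀ w a, τ w a = Rc (∑ k, a k • gr w k) := by
    intro w a
    simp [hτdef, ContinuousLinearMap.sum_apply, ContinuousLinearMap.smulRight_apply,
      ContinuousLinearMap.proj_apply, map_sum, map_smul]
  have hτ₀ : τ w₀ = 1 := by
    refine ContinuousLinearMap.ext fun a => ?_
    rw [hτapp, ← hTapp]
    have h := LinearMap.congr_fun hR a
    simpa [hRcdef] using h
  have hτcont : Continuous τ := by
    refine continuous_finset_sum _ fun k _ => ?_
    exact ((smulRightL ℝ ((Fin J ⊕ Fin M) → ℝ) ((Fin J ⊕ Fin M) → ℝ)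
      (ContinuousLinearMap.proj k)).continuous).comp (Rc.continuous.comp (hgrcont k))
  set sval : (Fin p → ℝ) → ((Fin J ⊕ Fin M) → ℝ) :=
    fun w => Ring.inverse (τ w) (Rc (fderiv ℝ U w)) with hsvaldef
  have huniq : ∀ (w : Fin p → ℝ) (a : (Fin J ⊕ Fin M) → ℝ), IsUnit (τ w) → fderiv ℝ U w = ∑ k, a k • gr w k → a = sval w := by
    intro w a hu he
    obtain ⟨u, hu'⟩ := hu
    have h1 : τ w a = Rc (fderiv ℝ U w) := by rw [hτapp, ← he]
    show a = Ring.inverse (τ w) (Rc (fderiv ℝ U w))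
    rw [← h1, ← hu', Ring.inverse_unit]
    show a = (↑u⁻¹ : ((Fin J ⊕ Fin M) → ℝ) →L[ℝ] ((Fin J ⊕ Fin M) → ℝ)) ((↑u : ((Fin J ⊕ Fin M) → ℝ) →L[ℝ] ((Fin J ⊕ Fin M) → ℝ)) a)
    rw [← ContinuousLinearMap.mul_apply, Units.inv_mul, ContinuousLinearMap.one_apply]
  have hzero : ∀ (w : Fin p → ℝ) (a : (Fin J ⊕ Fin M) → ℝ), IsUnit (τ w) → ∑ k, a k • gr w k = 0 → a = 0 := by
    intro w a hu he
    obtain ⟨u, hu'⟩ := hu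
    have h1 : τ w a = 0 := by rw [hτapp, he, map_zero]
    have h2 : (↑u⁻¹ : ((Fin J ⊕ Fin M) → ℝ) →L[ℝ] ((Fin J ⊕ Fin M) → ℝ)) ((↑u : ((Fin J ⊕ Fin M) → ℝ) →L[ℝ] ((Fin J ⊕ Fin M) → ℝ)) a)
        = 0 := by rw [hu', h1, map_zero]
    rw [← ContinuousLinearMap.mul_apply, Units.inv_mul, ContinuousLinearMap.one_apply] at h2
    exact h2
  have hFOCsum : fderiv ℝ U w₀ = ∑ k, Sum.elim μ₀ lam₀ k • gr w₀ k := by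
    rw [hgrdef]
    rw [sum_elim_smul_split]
    exact hFOC₀
  have hsval₀ : sval w₀ = Sum.elim μ₀ lam₀ :=
    (huniq w₀ _ (by rw [hτ₀]; exact isUnit_one) hFOCsum).symm
  -- ## continuity of the multiplier formula
  have hwcont : ContinuousAt wstar xstar := hw.continuousAt (hε.mem_nhds hxε)
  have hτunit : ContinuousAt Ring.inverse (τ w₀) := by
    rw [hτ₀]
    have h := NormedRing.inverse_continuousAt
      (1 : (((Fin J ⊕ Fin M) → ℝ) →L[ℝ] ((Fin J ⊕ Fin M) → ℝ))ˣ)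
    simpa using h
  have hsvalcont : ContinuousAt (fun x => sval (wstar x)) xstar := by
    have h1 : ContinuousAt (fun w => Ring.inverse (τ w)) w₀ :=
      hτunit.comp hτcont.continuousAt
    have h2 : ContinuousAt (fun w => Rc (fderiv ℝ U w)) w₀ :=
      (Rc.continuous.comp hDU.continuous).continuousAt
    have h3 : ContinuousAt (fun w => Ring.inverse (τ w) (Rc (fderiv ℝ U w))) w₀ :=
      by have h := isBoundedBilinearMap_apply.continuous.continuousAt.comp (h1.prodMk h2); exact h
    exact h3.comp hwcont
  have hunit_ev : ∀ᶠ x in 𝓝 xstar, IsUnit (τ (wstar x)) := by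
    have hcont : ContinuousAt (fun x => τ (wstar x)) xstar := hτcont.continuousAt.comp hwcont
    have hmem : {f : ((Fin J ⊕ Fin M) → ℝ) →L[ℝ] ((Fin J ⊕ Fin M) → ℝ) | IsUnit f}
        ∈ 𝓝 (τ (wstar xstar)) := Units.isOpen.mem_nhds (by rw [hτ₀]; exact isUnit_one)
    exact hcont.eventually_mem hmem
  -- ## Lagrange multipliers at nearby points
  have hlag : ∀ x, x ∈ ε → IsUnit (τ (wstar x)) →
      fderiv ℝ U (wstar x) = ∑ k, sval (wstar x) k • gr (wstar x) k := by
    intro x hx hu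
    obtain ⟨hGx, hcx⟩ := hfeas x hx
    set fam : (Fin J ⊕ Fin M) → (Fin p → ℝ) → ℝ :=
      fun k => Sum.elim (fun j v => G v j) (fun m v => c v m) k with hfamdef
    have hmaxon : IsMaxOn U {w | ∀ k, fam k w = fam k (wstar x)} (wstar x) := by
      intro w hw'
      have hw'' : G w = 0 ∧ c w = x := by
        constructor
        · funext j
          have h := hw' (Sum.inl j)
          simp only [hfamdef, Sum.elim_inl] at h
          rw [Pi.zero_apply]
          rw [h, show G (wstar x) j = 0 from by rw [hGx]; rfl]
        · funext m
          have h := hw' (Sum.inr m)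
          simp only [hfamdef, Sum.elim_inr] at h
          rw [h, show c (wstar x) m = x m from by rw [hcx]]
      rcases eq_or_ne w (wstar x) with rfl | hne
      · show U (wstar x) ≤ U (wstar x); exact le_rfl
      · exact (hmax x hx w hw''.1 hw''.2 hne).le
    have hextr : IsLocalExtrOn U {w | ∀ k, fam k w = fam k (wstar x)} (wstar x) :=
      hmaxon.localize.isExtr
    have hf' : ∀ k, HasStrictFDerivAt (fam k) (gr (wstar x) k) (wstar x) := by
      rintro (j | m)
      · exact (hGj j).contDiffAt.hasStrictFDerivAt (by norm_num)
      · exact (hcm m).contDiffAt.hasStrictFDerivAt (by norm_num)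
    obtain ⟨Λ, Λ₀, hne0, hsum⟩ := hextr.exists_multipliers_of_hasStrictFDerivAt hf'
      (hU.contDiffAt.hasStrictFDerivAt (by norm_num))
    have hΛ₀ : Λ₀ ≠ 0 := by
      intro h0
      apply hne0
      have h1 : ∑ k, Λ k • gr (wstar x) k = 0 := by
        have h := hsum; rw [h0, zero_smul, add_zero] at h; exact h
      have h2 := hzero (wstar x) Λ hu h1
      simp [h2, h0]
    have hDUx : fderiv ℝ U (wstar x) = ∑ k, (-Λ₀⁻¹ * Λ k) • gr (wstar x) k := by
      have h2 : Λ₀ • fderiv ℝ U (wstar x) = -∑ k, Λ k • gr (wstar x) k :=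
        eq_neg_of_add_eq_zero_right hsum
      have h3 : fderiv ℝ U (wstar x) = Λ₀⁻¹ • (Λ₀ • fderiv ℝ U (wstar x)) := by
        rw [smul_smul, inv_mul_cancel₀ hΛ₀, one_smul]
      rw [h3, h2]
      rw [← Finset.sum_neg_distrib, Finset.smul_sum]
      refine Finset.sum_congr rfl fun k _ => ?_
      rw [smul_neg, smul_smul, neg_mul]; exact (neg_smul _ _).symm
    have ha := huniq (wstar x) (fun k => -Λ₀⁻¹ * Λ k) hu hDUx
    rw [← ha]
    exact hDUx
  -- ## matching ζ with wstar
  set z' : (Fin M → ℝ) → ((Fin p → ℝ) × (Fin J → ℝ) × (Fin M → ℝ)) := fun x =>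
    (wstar x, fun j => sval (wstar x) (Sum.inl j), fun m => sval (wstar x) (Sum.inr m))
    with hz'def
  have hz'₀ : z' xstar = z₀ := by
    show (w₀, fun j => sval w₀ (Sum.inl j), fun m => sval w₀ (Sum.inr m)) = (w₀, μ₀, lam₀)
    rw [hsval₀]
    rfl
  have hΦz' : ∀ x, x ∈ ε → IsUnit (τ (wstar x)) → Φ (z' x) = (0, 0, x) := by
    intro x hx hu
    obtain ⟨hGx, hcx⟩ := hfeas x hx
    refine Prod.ext ?_ (Prod.ext ?_ ?_)
    · show fderiv ℝ U (wstar x)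
        - ∑ j, sval (wstar x) (Sum.inl j) • fderiv ℝ (fun v => G v j) (wstar x)
        - ∑ m, sval (wstar x) (Sum.inr m) • fderiv ℝ (fun v => c v m) (wstar x) = 0
      have h1 := hlag x hx hu
      rw [Fintype.sum_sum_type] at h1
      simp only [hgrdef, Sum.elim_inl, Sum.elim_inr] at h1
      rw [h1]
      abel
    · exact hGx
    · exact hcx
  have hz'cont : ContinuousAt z' xstar := by
    refine hwcont.prodMk (ContinuousAt.prodMk ?_ ?_)
    · exact continuousAt_pi.2 fun j => (continuous_apply (Sum.inl j)).continuousAt.comp hsvalcont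
    · exact continuousAt_pi.2 fun m => (continuous_apply (Sum.inr m)).continuousAt.comp hsvalcont
  have hev1 : ∀ᶠ x in 𝓝 xstar, x ∈ ε := by
    filter_upwards [hε.mem_nhds hxε] with x hx using hx
  have hev3 : ∀ᶠ x in 𝓝 xstar, Φ (ζ x) = (0, 0, x) := by
    have htt : Filter.Tendsto (fun x : Fin M → ℝ =>
        ((0 : (Fin p → ℝ) →L[ℝ] ℝ), (0 : Fin J → ℝ), x)) (𝓝 xstar) (𝓝 (0, 0, xstar)) :=
      hι3.continuous.continuousAt
    exact htt.eventually hΨright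
  have hev4 : ∀ᶠ x in 𝓝 xstar, Ψ (Φ (z' x)) = z' x := by
    have htt : Filter.Tendsto z' (𝓝 xstar) (𝓝 z₀) := by rw [← hz'₀]; exact hz'cont
    exact htt.eventually hΨleft
  have hev : ∀ᶠ x in 𝓝 xstar,
      x ∈ ε ∧ IsUnit (τ (wstar x)) ∧ Φ (ζ x) = (0, 0, x) ∧ ζ x = z' x := by
    filter_upwards [hev1, hunit_ev, hev3, hev4] with x h1 h2 h3 h4
    refine ⟨h1, h2, h3, ?_⟩
    calc ζ x = Ψ (0, 0, x) := rfl
    _ = Ψ (Φ (z' x)) := by rw [hΦz' x h1 h2]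
    _ = z' x := h4
  obtain ⟨t, htP, hto, hxt⟩ := eventually_nhds_iff.mp hev
  obtain ⟨u₁, hu₁, hcd₁⟩ := hζcd.contDiffOn le_rfl (by simp)
  obtain ⟨u₀, hu₀sub, huo, hxu₀⟩ := mem_nhds_iff.mp hu₁
  have hu₀cd : ContDiffOn ℝ 1 ζ u₀ := hcd₁.mono hu₀sub
  -- ## the chosen neighborhood and functions
  set ε' : Set (Fin M → ℝ) := t ∩ u₀ with hε'def
  have hopen : IsOpen ε' := hto.inter huo
  have hxε' : xstar ∈ ε' := ⟨hxt, hxu₀⟩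
  have hsubε : ε' ⊆ ε := fun x hx => (htP x hx.1).1
  have hζ' : ContDiffOn ℝ 1 ζ ε' := hu₀cd.mono Set.inter_subset_right
  have hζdiff : ∀ y ∈ ε', DifferentiableAt ℝ ζ y := fun y hy =>
    (hζ'.differentiableOn one_ne_zero).differentiableAt (hopen.mem_nhds hy)
  -- first-order conditions on ε'
  have hfoc' : ∀ x, x ∈ t → fderiv ℝ U (wstar x)
      = ∑ j, (ζ x).2.1 j • fderiv ℝ (fun v => G v j) (wstar x)
        + ∑ m, (ζ x).2.2 m • fderiv ℝ (fun v => c v m) (wstar x) := by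
    intro x hx
    obtain ⟨hxε1, hxunit, hΦζ, hζz'⟩ := htP x hx
    have hw1 : (ζ x).1 = wstar x := by rw [hζz']
    have h0' : fderiv ℝ U ((ζ x).1)
        - ∑ j, (ζ x).2.1 j • fderiv ℝ (fun v => G v j) ((ζ x).1)
        - ∑ m, (ζ x).2.2 m • fderiv ℝ (fun v => c v m) ((ζ x).1) = 0 :=
      congrArg Prod.fst hΦζ
    rw [hw1] at h0'
    rw [sub_sub] at h0'
    exact sub_eq_zero.mp h0'
  -- the pairing CLM for the symmetry argument
  set Pc : (Fin M → ℝ) →L[ℝ] ((Fin M → ℝ) →L[ℝ] ℝ) :=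
    ∑ m, (ContinuousLinearMap.proj m).smulRight (ContinuousLinearMap.proj m) with hPcdef
  have hPcapp : ∀ l e, Pc l e = ∑ m, l m * e m := by
    intro l e
    simp [hPcdef, ContinuousLinearMap.sum_apply, ContinuousLinearMap.smulRight_apply,
      ContinuousLinearMap.proj_apply, smul_eq_mul]
  -- derivative of the value function
  have hVd : ∀ y ∈ ε', HasFDerivAt (fun s => U ((ζ s).1)) (Pc ((ζ y).2.2)) y := by
    intro y hy
    obtain ⟨hyε1, hyunit, hΦζ, hζz'⟩ := htP y hy.1
    have hwfd : HasFDerivAt (fun s => (ζ s).1) (fderiv ℝ (fun s => (ζ s).1) y) y :=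
      ((hζdiff y hy).fst).hasFDerivAt
    have hchain : HasFDerivAt (fun s => U ((ζ s).1))
        ((fderiv ℝ U ((ζ y).1)).comp (fderiv ℝ (fun s => (ζ s).1) y)) y :=
      ((hU.differentiable (by norm_num) ((ζ y).1)).hasFDerivAt).comp y hwfd
    have hGcomp : ∀ j, (fderiv ℝ (fun v => G v j) ((ζ y).1)).comp
        (fderiv ℝ (fun s => (ζ s).1) y) = 0 := by
      intro j
      have hA : HasFDerivAt (fun s => G ((ζ s).1) j)
          ((fderiv ℝ (fun v => G v j) ((ζ y).1)).comp (fderiv ℝ (fun s => (ζ s).1) y)) y :=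
        by have h := (((hGj j).differentiable (by norm_num)) ((ζ y).1)).hasFDerivAt.comp y hwfd; exact h
      have heq : (fun s => G ((ζ s).1) j) =ᶠ[𝓝 y] fun _ => (0 : ℝ) := by
        filter_upwards [hopen.mem_nhds hy] with s hs
        have h2 := (htP s hs.1).2.2.1
        have h3 : G ((ζ s).1) = 0 := congrArg (fun q => q.2.1) h2
        exact congrFun h3 j
      have hB : HasFDerivAt (fun _ : Fin M → ℝ => (0 : ℝ))
          ((fderiv ℝ (fun v => G v j) ((ζ y).1)).comp (fderiv ℝ (fun s => (ζ s).1) y)) y :=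
        hA.congr_of_eventuallyEq heq.symm
      exact hB.unique (hasFDerivAt_const 0 y)
    have hccomp : ∀ m, (fderiv ℝ (fun v => c v m) ((ζ y).1)).comp
        (fderiv ℝ (fun s => (ζ s).1) y) = ContinuousLinearMap.proj m := by
      intro m
      have hA : HasFDerivAt (fun s => c ((ζ s).1) m)
          ((fderiv ℝ (fun v => c v m) ((ζ y).1)).comp (fderiv ℝ (fun s => (ζ s).1) y)) y :=
        by have h := (((hcm m).differentiable (by norm_num)) ((ζ y).1)).hasFDerivAt.comp y hwfd; exact h
      have heq : (fun s => c ((ζ s).1) m) =ᶠ[𝓝 y] fun s => s m := by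
        filter_upwards [hopen.mem_nhds hy] with s hs
        have h2 := (htP s hs.1).2.2.1
        have h3 : c ((ζ s).1) = s := congrArg (fun q => q.2.2) h2
        exact congrFun h3 m
      have hB : HasFDerivAt (fun s : Fin M → ℝ => s m)
          ((fderiv ℝ (fun v => c v m) ((ζ y).1)).comp (fderiv ℝ (fun s => (ζ s).1) y)) y :=
        hA.congr_of_eventuallyEq heq.symm
      exact hB.unique (hasFDerivAt_apply m y)
    have hw1 : (ζ y).1 = wstar y := by rw [hζz']
    have hkey : (fderiv ℝ U ((ζ y).1)).comp (fderiv ℝ (fun s => (ζ s).1) y)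
        = Pc ((ζ y).2.2) := by
      have h1 : fderiv ℝ U ((ζ y).1)
          = ∑ j, (ζ y).2.1 j • fderiv ℝ (fun v => G v j) ((ζ y).1)
            + ∑ m, (ζ y).2.2 m • fderiv ℝ (fun v => c v m) ((ζ y).1) := by
        have h0' : fderiv ℝ U ((ζ y).1)
            - ∑ j, (ζ y).2.1 j • fderiv ℝ (fun v => G v j) ((ζ y).1)
            - ∑ m, (ζ y).2.2 m • fderiv ℝ (fun v => c v m) ((ζ y).1) = 0 :=
          congrArg Prod.fst hΦζ
        rw [sub_sub] at h0'
        exact sub_eq_zero.mp h0'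
      refine ContinuousLinearMap.ext fun e => ?_
      rw [ContinuousLinearMap.comp_apply, h1]
      have e1 : ∀ j, fderiv ℝ (fun v => G v j) ((ζ y).1)
          ((fderiv ℝ (fun s => (ζ s).1) y) e) = 0 := by
        intro j
        have h := congrArg (fun (L : (Fin M → ℝ) →L[ℝ] ℝ) => L e) (hGcomp j)
        simpa using h
      have e2 : ∀ m, fderiv ℝ (fun v => c v m) ((ζ y).1)
          ((fderiv ℝ (fun s => (ζ s).1) y) e) = e m := by
        intro m
        have h := congrArg (fun (L : (Fin M → ℝ) →L[ℝ] ℝ) => L e) (hccomp m)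
        simpa using h
      simp [ContinuousLinearMap.add_apply, ContinuousLinearMap.sum_apply,
        ContinuousLinearMap.smul_apply, smul_eq_mul, e1, e2, hPcapp]
    rw [← hkey]
    exact hchain
  -- ## final assembly
  refine ⟨ε', hopen, hxε', hsubε, (fun x => (ζ x).2.2), (fun x => (ζ x).2.1), ?_, ?_, ?_, ?_, ?_⟩
  · exact (contDiff_snd.comp contDiff_snd).comp_contDiffOn hζ'
  · exact (contDiff_fst.comp contDiff_snd).comp_contDiffOn hζ'
  · exact fun x hx => hfoc' x hx.1
  · intro x hx mu' lam' hyp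
    obtain ⟨hxε1, hxunit, hΦζ, hζz'⟩ := htP x hx.1
    have key : ∀ (aa : (Fin J ⊕ Fin M) → ℝ), fderiv ℝ U (wstar x)
        = ∑ j, aa (Sum.inl j) • fderiv ℝ (fun v => G v j) (wstar x)
          + ∑ m, aa (Sum.inr m) • fderiv ℝ (fun v => c v m) (wstar x)
        → aa = sval (wstar x) := by
      intro aa ha
      refine huniq (wstar x) aa hxunit ?_
      rw [Fintype.sum_sum_type]
      simp only [hgrdef, Sum.elim_inl, Sum.elim_inr]
      exact ha
    have h1 : Sum.elim mu' lam' = sval (wstar x) := key _ (by simpa using hyp)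
    have h2 : Sum.elim ((ζ x).2.1) ((ζ x).2.2) = sval (wstar x) :=
      key _ (by simpa using hfoc' x hx.1)
    constructor
    · funext j
      have e1 := congrFun h1 (Sum.inl j)
      have e2 := congrFun h2 (Sum.inl j)
      simp only [Sum.elim_inl] at e1 e2
      rw [e1, ← e2]
    · funext m
      have e1 := congrFun h1 (Sum.inr m)
      have e2 := congrFun h2 (Sum.inr m)
      simp only [Sum.elim_inr] at e1 e2
      rw [e1, ← e2]
  · intro x hx i j'
    show fderiv ℝ (fun y => (ζ y).2.2 i) x (Pi.single j' 1)
      = fderiv ℝ (fun y => (ζ y).2.2 j') x (Pi.single i 1)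
    have hevd : ∀ᶠ y in 𝓝 x, HasFDerivAt (fun s => U ((ζ s).1))
        ((fun s => Pc ((ζ s).2.2)) y) y := by
      filter_upwards [hopen.mem_nhds hx] with y hy using hVd y hy
    have hldiff : DifferentiableAt ℝ (fun s => (ζ s).2.2) x := ((hζdiff x hx).snd).snd
    have hf'' : HasFDerivAt (fun s => Pc ((ζ s).2.2))
        (Pc.comp (fderiv ℝ (fun s => (ζ s).2.2) x)) x :=
      Pc.hasFDerivAt.comp x hldiff.hasFDerivAt
    have hsym := second_derivative_symmetric_of_eventually hevd hf''
      (Pi.single i 1) (Pi.single j' 1)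
    have hproj : ∀ (i0 : Fin M) (v : Fin M → ℝ),
        fderiv ℝ (fun y => (ζ y).2.2 i0) x v
          = (fderiv ℝ (fun s => (ζ s).2.2) x v) i0 := by
      intro i0 v
      have h1 : HasFDerivAt (fun y => (ζ y).2.2 i0)
          ((ContinuousLinearMap.proj i0).comp (fderiv ℝ (fun s => (ζ s).2.2) x)) x :=
        (ContinuousLinearMap.proj i0 :
          (Fin M → ℝ) →L[ℝ] ℝ).hasFDerivAt.comp x hldiff.hasFDerivAt
      rw [h1.fderiv]
      rfl
    rw [hproj i, hproj j']
    have happ : ∀ v e, (Pc.comp (fderiv ℝ (fun s => (ζ s).2.2) x)) v e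
        = ∑ m, (fderiv ℝ (fun s => (ζ s).2.2) x v) m * e m := by
      intro v e
      rw [ContinuousLinearMap.comp_apply, hPcapp]
    rw [happ, happ] at hsym
    simp only [Pi.single_apply, mul_ite, mul_one, mul_zero,
      Finset.sum_ite_eq', Finset.mem_univ, if_true] at hsym
    exact hsym.symm
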